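/- Assume the syzygy graph G_I is a tree and I has linear relations. Then every ordering u_{r_1},…,u_{r_m} of the minimal generators of I with the property that, for each t with 1 ≤ t ≤ m, the induced subgraph of G_I on {u_{r_1},…,u_{r_t}} is connected, is an admissible order: for every t ≥ 2 the colon ideal (u_{r_1},…,u_{r_{t−1}}) : u_{r_t} is generated by a subset of the variables {x_1,…,x_n}. -/

import Mathlib

open MvPolynomial Finset

attribute [local instance] Classical.propDecidable

/-- The (first linear) syzygy graph of a squarefree monomial ideal whose generators
have supports `F i`, all of cardinality `d`: vertices are the generators, and two
generators are adjacent iff their supports meet in `d - 1` elements (equivalently,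
there are variables `x, y` with `x * u i = y * u j`). -/
def syzGraph {n m : ℕ} (F : Fin m → Finset (Fin n)) (d : ℕ) : SimpleGraph (Fin m) where
  Adj i j := i ≠ j ∧ (F i ∩ F j).card + 1 = d
  symm := by
    constructor
    intro i j h
    exact ⟨h.1.symm, by rw [Finset.inter_comm]; exact h.2⟩
  loopless := by constructor; intro i h; exact h.1 rfl

/-- The map `φ : S^ι → S`, `e i ↦ u i`. -/
noncomputable def phi {R : Type*} [CommRing R] {ι : Type*} [Fintype ι] (u : ι → R) :
    (ι → R) →ₗ[R] R where
  toFun c := ∑ i, c i * u i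
  map_add' a b := by simp [add_mul, Finset.sum_add_distrib]
  map_smul' r a := by simp [Finset.mul_sum, mul_assoc]

/-- The set of linear syzygies `x_a e_i - x_b e_j` with `x_a u_i = x_b u_j`. -/
def linSyz {k : Type*} [Field k] {n : ℕ} {ι : Type*} [DecidableEq ι]
    (u : ι → MvPolynomial (Fin n) k) : Set (ι → MvPolynomial (Fin n) k) :=
  { w | ∃ (i j : ι) (a b : Fin n), X a * u i = X b * u j ∧
      w = Pi.single i (X a) - Pi.single j (X b) }

/-- `I = (u i : i)` has linear relations: `ker φ` is generated by the linear syzygies. -/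
def HasLinRel {k : Type*} [Field k] {n : ℕ} {ι : Type*} [Fintype ι] [DecidableEq ι]
    (u : ι → MvPolynomial (Fin n) k) : Prop :=
  Submodule.span (MvPolynomial (Fin n) k) (linSyz u) = LinearMap.ker (phi u)

/-- `I = (u 1, …, u m)` has linear quotients: for some ordering of the generators, each
colon ideal `(u_{σ 1}, …, u_{σ (i-1)}) : u_{σ i}` is generated by a subset of the variables. -/
def LinQuot {k : Type*} [Field k] {n m : ℕ} (u : Fin m → MvPolynomial (Fin n) k) : Prop :=
  ∃ σ : Equiv.Perm (Fin m), ∀ i : Fin m, i.val ≠ 0 →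
    ∃ T : Set (Fin n),
      Submodule.colon (Ideal.span ((fun j => u (σ j)) '' {j : Fin m | j < i}))
        (Ideal.span {u (σ i)}) = Ideal.span (X '' T)

/-- Variable-decomposability of a monomial ideal given by its (finite) minimal
generating set `G`: either `G` is a singleton (principal ideal), or there is a shedding
variable `x l` such that both `I_{x l}` and `I^{x l}` are variable-decomposable. -/
inductive VarDecomp {k : Type*} [Field k] {n : ℕ} :
    Finset (MvPolynomial (Fin n) k) → Prop
  | principal (u : MvPolynomial (Fin n) k) : VarDecomp {u}
  | shed (G : Finset (MvPolynomial (Fin n) k)) (l : Fin n)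
      (hne : (G.filter fun u => ¬ X l ∣ u).Nonempty)
      (hshed : ∀ u ∈ G.filter (fun u => ¬ X l ∣ u),
        ∃ v ∈ G.filter (fun u => X l ∣ u),
          Submodule.colon (Ideal.span {v}) (Ideal.span {u}) = Ideal.span {X l})
      (h1 : VarDecomp (G.filter fun u => ¬ X l ∣ u))
      (h2 : VarDecomp (G.filter fun u => X l ∣ u)) : VarDecomp G


noncomputable def expo {n : ℕ} (F : Finset (Fin n)) : Fin n →₀ ℕ :=
  ∑ l ∈ F, Finsupp.single l 1

/-- `I = (u 1, …, u m)` has linear quotients: for some ordering of the generators, each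
colon ideal `(u_{σ 1}, …, u_{σ (i-1)}) : u_{σ i}` is generated by a subset of the variables. -/

lemma expo_apply {n : ℕ} (F : Finset (Fin n)) (l : Fin n) :
    expo F l = if l ∈ F then 1 else 0 := by
  classical
  rw [expo, Finset.sum_apply']
  by_cases h : l ∈ F
  · rw [if_pos h, Finset.sum_eq_single l (fun b _ hb => Finsupp.single_eq_of_ne' hb)
      (fun h' => absurd h h'), Finsupp.single_eq_same]
  · rw [if_neg h]
    exact Finset.sum_eq_zero fun b hb => Finsupp.single_eq_of_ne' (fun e => h (e ▸ hb))

lemma expo_inj {n : ℕ} {F G : Finset (Fin n)} (h : expo F = expo G) : F = G := by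
  ext l
  have := congrArg (fun f => f l) h
  simp only [expo_apply] at this
  by_cases hF : l ∈ F <;> by_cases hG : l ∈ G <;> simp [hF, hG] at this ⊢

lemma prod_X_eq {k : Type*} [Field k] {n : ℕ} (F : Finset (Fin n)) :
    (∏ l ∈ F, (X l : MvPolynomial (Fin n) k)) = monomial (expo F) 1 := by
  rw [expo, monomial_sum_one]
  exact Finset.prod_congr rfl fun l _ => rfl

lemma prod_X_ne_zero {k : Type*} [Field k] {n : ℕ} (F : Finset (Fin n)) :
    (∏ l ∈ F, (X l : MvPolynomial (Fin n) k)) ≠ 0 := by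
  rw [prod_X_eq, Ne, monomial_eq_zero]
  exact one_ne_zero

lemma syz_adj {k : Type*} [Field k] {n m d : ℕ} {F : Fin m → Finset (Fin n)}
    (hinj : Function.Injective F) (hcard : ∀ i : Fin m, (F i).card = d)
    {i j : Fin m} (hij : i ≠ j) {a b : Fin n}
    (h : X a * (∏ l ∈ F i, (X l : MvPolynomial (Fin n) k)) = X b * ∏ l ∈ F j, X l) :
    (syzGraph F d).Adj i j := by
  classical
  rw [prod_X_eq, prod_X_eq] at h
  have hX : ∀ c : Fin n, (X c : MvPolynomial (Fin n) k) = monomial (Finsupp.single c 1) 1 := by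
    intro c
    rw [X, monomial]
  rw [hX a, hX b, monomial_mul, monomial_mul, one_mul] at h
  have e : Finsupp.single a 1 + expo (F i) = Finsupp.single b 1 + expo (F j) := by
    rcases (monomial_eq_monomial_iff _ _ _ _).1 h with ⟨h1, _⟩ | ⟨h1, _⟩
    · exact h1
    · exact absurd h1 one_ne_zero
  have key : ∀ l : Fin n, Finsupp.single a 1 l + expo (F i) l
      = Finsupp.single b 1 l + expo (F j) l := by
    intro l
    have := congrArg (fun f : Fin n →₀ ℕ => f l) e
    simpa using this
  have hab : a ≠ b := by
    intro hc; subst hc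
    exact hij (hinj (expo_inj (add_left_cancel e)))
  have ka := key a
  rw [Finsupp.single_eq_same, Finsupp.single_eq_of_ne' (Ne.symm hab)] at ka
  have kb := key b
  rw [Finsupp.single_eq_same, Finsupp.single_eq_of_ne' hab] at kb
  simp only [expo_apply] at ka kb
  have ha : a ∈ F j ∧ a ∉ F i := by
    by_cases h1 : a ∈ F i <;> by_cases h2 : a ∈ F j <;>
      simp [h1, h2] at ka ⊢ <;> omega
  have hb : b ∈ F i ∧ b ∉ F j := by
    by_cases h1 : b ∈ F i <;> by_cases h2 : b ∈ F j <;>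
      simp [h1, h2] at kb ⊢ <;> omega
  have hset : F i ∩ F j = (F i).erase b := by
    ext l
    simp only [Finset.mem_inter, Finset.mem_erase]
    constructor
    · rintro ⟨h1, h2⟩
      exact ⟨fun hc => hb.2 (hc ▸ h2), h1⟩
    · rintro ⟨hlb, h1⟩
      have hla : l ≠ a := fun hc => ha.2 (hc ▸ h1)
      have kl := key l
      rw [Finsupp.single_eq_of_ne' (Ne.symm hla), Finsupp.single_eq_of_ne' (Ne.symm hlb)] at kl
      simp only [expo_apply] at kl
      refine ⟨h1, ?_⟩
      by_cases h2 : l ∈ F j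
      · exact h2
      · simp [h1, h2] at kl
  refine ⟨hij, ?_⟩
  rw [hset, Finset.card_erase_of_mem hb.1, hcard i]
  have : 0 < d := by rw [← hcard i]; exact Finset.card_pos.2 ⟨b, hb.1⟩
  omega

lemma adj_sdiff {n m d : ℕ} {F : Fin m → Finset (Fin n)}
    (hcard : ∀ i : Fin m, (F i).card = d) {i j : Fin m}
    (h : (syzGraph F d).Adj i j) :
    ∃ l : Fin n, l ∈ F i ∧ l ∉ F j ∧ F i ⊆ insert l (F j) := by
  classical
  have h2 := h.2
  have hc : (F i \ F j).card = 1 := by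
    have := Finset.card_sdiff_add_card_inter (F i) (F j)
    rw [hcard i] at this
    omega
  obtain ⟨l, hl⟩ := Finset.card_eq_one.1 hc
  have hmem : l ∈ F i ∧ l ∉ F j := by
    have : l ∈ F i \ F j := hl ▸ Finset.mem_singleton_self l
    exact Finset.mem_sdiff.1 this
  refine ⟨l, hmem.1, hmem.2, fun x hx => ?_⟩
  by_cases hxj : x ∈ F j
  · exact Finset.mem_insert_of_mem hxj
  · have : x ∈ F i \ F j := Finset.mem_sdiff.2 ⟨hx, hxj⟩
    rw [hl, Finset.mem_singleton] at this
    exact this ▸ Finset.mem_insert_self l (F j)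

section Theta
variable {k : Type*} [Field k] {n m : ℕ}
  (π : MvPolynomial (Fin n) k →ₐ[k] MvPolynomial (Fin n) k)
  (C : Set (Fin m)) (u : Fin m → MvPolynomial (Fin n) k)

lemma theta_single (i : Fin m) (x : MvPolynomial (Fin n) k) :
    (∑ v, if v ∈ C then π ((Pi.single i x : Fin m → MvPolynomial (Fin n) k) v * u v) else 0) =
      if i ∈ C then π (x * u i) else 0 := by
  classical
  rw [Finset.sum_eq_single i]
  · rw [Pi.single_eq_same]
  · intro v _ hv
    rw [Pi.single_eq_of_ne hv, zero_mul, map_zero, ite_self]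
  · intro h
    exact absurd (Finset.mem_univ i) h

lemma theta_vanish
    (hgen : ∀ (i j : Fin m) (a b : Fin n), X a * u i = X b * u j →
      (if i ∈ C then π (X a * u i) else 0) = (if j ∈ C then π (X b * u j) else 0))
    {w : Fin m → MvPolynomial (Fin n) k}
    (hw : w ∈ Submodule.span (MvPolynomial (Fin n) k) (linSyz u)) :
    (∑ v, if v ∈ C then π (w v * u v) else 0) = 0 := by
  classical
  refine Submodule.span_induction ?_ ?_ ?_ ?_ hw
  · rintro g ⟨i', j', a, b, hab, rfl⟩
    have hsplit : ∀ v : Fin m,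
        (if v ∈ C then π (((Pi.single i' (X a) - Pi.single j' (X b)) : Fin m → MvPolynomial (Fin n) k) v * u v) else 0)
        = (if v ∈ C then π ((Pi.single i' (X a) : Fin m → MvPolynomial (Fin n) k) v * u v) else 0)
          - (if v ∈ C then π ((Pi.single j' (X b) : Fin m → MvPolynomial (Fin n) k) v * u v) else 0) := by
      intro v
      rw [Pi.sub_apply, sub_mul, map_sub]
      split <;> simp
    rw [Finset.sum_congr rfl (fun v _ => hsplit v), Finset.sum_sub_distrib,
      theta_single, theta_single, hgen i' j' a b hab, sub_self]
  · exact Finset.sum_eq_zero fun v _ => by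
      rw [Pi.zero_apply, zero_mul, map_zero, ite_self]
  · intro x y _ _ hx hy
    have hsplit : ∀ v : Fin m,
        (if v ∈ C then π ((x + y) v * u v) else 0)
        = (if v ∈ C then π (x v * u v) else 0) + (if v ∈ C then π (y v * u v) else 0) := by
      intro v
      rw [Pi.add_apply, add_mul, map_add]
      split <;> simp
    rw [Finset.sum_congr rfl (fun v _ => hsplit v), Finset.sum_add_distrib, hx, hy, add_zero]
  · intro r x _ hx
    have hsplit : ∀ v : Fin m,
        (if v ∈ C then π ((r • x) v * u v) else 0)
        = π r * (if v ∈ C then π (x v * u v) else 0) := by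
      intro v
      rw [Pi.smul_apply, smul_eq_mul, mul_assoc, map_mul]
      split <;> simp
    rw [Finset.sum_congr rfl (fun v _ => hsplit v), ← Finset.mul_sum, hx, mul_zero]

lemma theta_koszul {i0 j0 : Fin m} (hi0 : i0 ∈ C) (hj0 : j0 ∉ C) :
    (∑ v, if v ∈ C then
        π (((Pi.single i0 (u j0) - Pi.single j0 (u i0)) : Fin m → MvPolynomial (Fin n) k) v * u v)
      else 0) = π (u j0 * u i0) := by
  classical
  have hsplit : ∀ v : Fin m,
      (if v ∈ C then π (((Pi.single i0 (u j0) - Pi.single j0 (u i0)) : Fin m → MvPolynomial (Fin n) k) v * u v) else 0)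
      = (if v ∈ C then π ((Pi.single i0 (u j0) : Fin m → MvPolynomial (Fin n) k) v * u v) else 0)
        - (if v ∈ C then π ((Pi.single j0 (u i0) : Fin m → MvPolynomial (Fin n) k) v * u v) else 0) := by
    intro v
    rw [Pi.sub_apply, sub_mul, map_sub]
    split <;> simp
  rw [Finset.sum_congr rfl (fun v _ => hsplit v), Finset.sum_sub_distrib,
    theta_single, theta_single, if_pos hi0, if_neg hj0, sub_zero]

lemma koszul_ker (i0 j0 : Fin m) :
    ((Pi.single i0 (u j0) - Pi.single j0 (u i0)) : Fin m → MvPolynomial (Fin n) k)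
      ∈ LinearMap.ker (phi u) := by
  classical
  have phi_single : ∀ (i : Fin m) (x : MvPolynomial (Fin n) k),
      phi u (Pi.single i x) = x * u i := by
    intro i x
    show (∑ v, (Pi.single i x : Fin m → MvPolynomial (Fin n) k) v * u v) = x * u i
    rw [Finset.sum_eq_single i]
    · rw [Pi.single_eq_same]
    · intro v _ hv
      rw [Pi.single_eq_of_ne hv, zero_mul]
    · intro h
      exact absurd (Finset.mem_univ i) h
  rw [LinearMap.mem_ker, map_sub, phi_single, phi_single, mul_comm, sub_self]

end Theta

lemma pi_prod {k : Type*} [Field k] {n : ℕ} (A F : Finset (Fin n)) :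
    ((aeval (fun l : Fin n => if l ∈ A then (X l : MvPolynomial (Fin n) k) else 0) :
        MvPolynomial (Fin n) k →ₐ[k] MvPolynomial (Fin n) k))
      (∏ l ∈ F, X l) = if F ⊆ A then ∏ l ∈ F, (X l : MvPolynomial (Fin n) k) else 0 := by
  classical
  rw [map_prod]
  by_cases h : F ⊆ A
  · rw [if_pos h]
    exact Finset.prod_congr rfl fun l hl => by rw [aeval_X, if_pos (h hl)]
  · rw [if_neg h]
    obtain ⟨l, hl, hla⟩ := Finset.not_subset.1 h
    exact Finset.prod_eq_zero hl (by rw [aeval_X, if_neg hla])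


lemma linrel_reach {k : Type*} [Field k] {n m d : ℕ} {F : Fin m → Finset (Fin n)}
    (hinj : Function.Injective F) (hcard : ∀ i : Fin m, (F i).card = d)
    (hlin : HasLinRel (fun i : Fin m => ∏ l ∈ F i, (X l : MvPolynomial (Fin n) k)))
    (i0 j0 : Fin m) :
    Relation.ReflTransGen
      (fun v w => (syzGraph F d).Adj v w ∧ F v ⊆ F i0 ∪ F j0 ∧ F w ⊆ F i0 ∪ F j0) i0 j0 := by
  classical
  set u : Fin m → MvPolynomial (Fin n) k := fun i => ∏ l ∈ F i, X l with hu
  set A : Finset (Fin n) := F i0 ∪ F j0 with hA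
  set R : Fin m → Fin m → Prop :=
    fun v w => (syzGraph F d).Adj v w ∧ F v ⊆ A ∧ F w ⊆ A with hR
  set π : MvPolynomial (Fin n) k →ₐ[k] MvPolynomial (Fin n) k :=
    aeval (fun l : Fin n => if l ∈ A then X l else 0) with hπ
  set C : Set (Fin m) := {v | Relation.ReflTransGen R i0 v} with hC
  show j0 ∈ C
  have hπu : ∀ v : Fin m, π (u v) = if F v ⊆ A then u v else 0 := fun v => pi_prod A (F v)
  have hπX : ∀ a : Fin n, π (X a) = if a ∈ A then X a else 0 := fun a => aeval_X _ a
  have hgen : ∀ (i j : Fin m) (a b : Fin n), X a * u i = X b * u j →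
      (if i ∈ C then π (X a * u i) else 0) = (if j ∈ C then π (X b * u j) else 0) := by
    intro i j a b hab
    by_cases hij : i = j
    · subst hij
      have : a = b := X_injective (mul_right_cancel₀ (prod_X_ne_zero (F i)) hab)
      rw [this]
    · rw [hab]
      by_cases hz : π (X b * u j) = 0
      · rw [hz, ite_self, ite_self]
      · -- the monomial survives π, so both supports lie in A and i, j are adjacent in A
        have hbFj : b ∈ A ∧ F j ⊆ A := by
          constructor
          · by_contra hbA
            exact hz (by rw [map_mul, hπX, if_neg hbA, zero_mul])
          · by_contra hFA
            exact hz (by rw [map_mul, hπu, if_neg hFA, mul_zero])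
        have haFi : a ∈ A ∧ F i ⊆ A := by
          rw [← hab] at hz
          constructor
          · by_contra haA
            exact hz (by rw [map_mul, hπX, if_neg haA, zero_mul])
          · by_contra hFA
            exact hz (by rw [map_mul, hπu, if_neg hFA, mul_zero])
        have hadj : (syzGraph F d).Adj i j := syz_adj hinj hcard hij hab
        have hiff : i ∈ C ↔ j ∈ C :=
          ⟨fun h => Relation.ReflTransGen.tail h ⟨hadj, haFi.2, hbFj.2⟩,
           fun h => Relation.ReflTransGen.tail h ⟨hadj.symm, hbFj.2, haFi.2⟩⟩
        by_cases hi : i ∈ C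
        · rw [if_pos hi, if_pos (hiff.1 hi)]
        · rw [if_neg hi, if_neg (fun h => hi (hiff.2 h))]
  have hwspan : ((Pi.single i0 (u j0) - Pi.single j0 (u i0)) : Fin m → MvPolynomial (Fin n) k)
      ∈ Submodule.span (MvPolynomial (Fin n) k) (linSyz u) := by
    rw [hlin]
    exact koszul_ker u i0 j0
  have hvan := theta_vanish π C u hgen hwspan
  have hi0 : i0 ∈ C := Relation.ReflTransGen.refl
  by_contra hj0
  rw [theta_koszul π C u hi0 hj0] at hvan
  have hval : π (u j0 * u i0) = u j0 * u i0 := by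
    rw [map_mul, hπu, hπu, if_pos (Finset.subset_union_right : F j0 ⊆ A),
      if_pos (Finset.subset_union_left : F i0 ⊆ A)]
  rw [hval] at hvan
  exact mul_ne_zero (prod_X_ne_zero _) (prod_X_ne_zero _) hvan

lemma reach_path {V : Type*} (G : SimpleGraph V) (P : V → Prop) {a b : V} (hPa : P a)
    (h : Relation.ReflTransGen (fun v w => G.Adj v w ∧ P v ∧ P w) a b) :
    ∃ w : G.Walk a b, ∀ v ∈ w.support, P v := by
  induction h with
  | refl => exact ⟨SimpleGraph.Walk.nil, by simp [hPa]⟩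
  | tail h1 h2 ih =>
    obtain ⟨w, hw⟩ := ih
    refine ⟨w.concat h2.1, fun v hv => ?_⟩
    rw [SimpleGraph.Walk.support_concat] at hv
    rcases List.mem_append.1 hv with h | h
    · exact hw v h
    · exact (List.mem_singleton.1 h) ▸ h2.2.2

lemma induced_walk {V : Type*} (G : SimpleGraph V) (s : Set V)
    (hconn : (G.induce s).Connected) {a b : V} (ha : a ∈ s) (hb : b ∈ s) :
    ∃ w : G.Walk a b, ∀ v ∈ w.support, v ∈ s := by
  obtain ⟨w⟩ := hconn.preconnected ⟨a, ha⟩ ⟨b, hb⟩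
  refine ⟨w.map (SimpleGraph.Embedding.induce s).toHom, fun v hv => ?_⟩
  erw [SimpleGraph.Walk.support_map] at hv
  obtain ⟨x, _, rfl⟩ := List.mem_map.1 hv
  exact x.2

lemma tree_step {V : Type*} {G : SimpleGraph V} (htree : G.IsTree) (P Q : V → Prop)
    {a b : V} (hab : a ≠ b) (hPa : P a)
    (h1 : Relation.ReflTransGen (fun v w => G.Adj v w ∧ P v ∧ P w) a b)
    (h2 : ∃ w : G.Walk a b, ∀ v ∈ w.support, Q v) :
    ∃ c, G.Adj a c ∧ P c ∧ Q c := by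
  obtain ⟨w1, hw1⟩ := reach_path G P hPa h1
  obtain ⟨w2, hw2⟩ := h2
  have hpeq : w1.toPath = w2.toPath := htree.IsAcyclic.path_unique _ _
  have hp1 : ∀ v ∈ (w1.toPath : G.Walk a b).support, P v :=
    fun v hv => hw1 v (w1.support_toPath_subset hv)
  have hp2 : ∀ v ∈ (w1.toPath : G.Walk a b).support, Q v :=
    fun v hv => hw2 v (w2.support_toPath_subset (by rw [← hpeq]; exact hv))
  obtain ⟨c, hadj, w', hw'⟩ :=
    SimpleGraph.Walk.exists_eq_cons_of_ne hab (w1.toPath : G.Walk a b)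
  have hc : c ∈ (w1.toPath : G.Walk a b).support := by
    rw [hw', SimpleGraph.Walk.support_cons]
    exact List.mem_cons_of_mem _ w'.start_mem_support
  exact ⟨c, hadj, hp1 c hc, hp2 c hc⟩

/-- Suppose `G_I` is a tree and `I` has linear relations. Then every ordering
`u (σ 0), …, u (σ (m-1))` of the generators such that each initial segment induces a
connected subgraph of `G_I` is an admissible order: every colon ideal
`(u (σ 0), …, u (σ (t-1))) : u (σ t)` is generated by a subset of the variables. -/
theorem stmt12 {k : Type*} [Field k] {n m d : ℕ}
    (F : Fin m → Finset (Fin n)) (hinj : Function.Injective F)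
    (hcard : ∀ i, (F i).card = d)
    (htree : (syzGraph F d).IsTree)
    (hlin : HasLinRel (fun i : Fin m => ∏ l ∈ F i, (X l : MvPolynomial (Fin n) k)))
    (σ : Equiv.Perm (Fin m))
    (hconn : ∀ t : ℕ, 1 ≤ t → t ≤ m →
      ((syzGraph F d).induce {i : Fin m | ∃ j : Fin m, j.val < t ∧ σ j = i}).Connected) :
    ∀ i : Fin m, i.val ≠ 0 →
      ∃ T : Set (Fin n),
        Submodule.colon
          (Ideal.span ((fun j : Fin m =>
              ∏ l ∈ F (σ j), (X l : MvPolynomial (Fin n) k)) '' {j : Fin m | j < i}))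
          (Ideal.span {∏ l ∈ F (σ i), (X l : MvPolynomial (Fin n) k)}) =
        Ideal.span (X '' T) := by
  classical
  intro i _
  -- Step (*) : for each j < i there is a variable l ∈ T ∩ (F (σ j) \ F (σ i))
  have hstar : ∀ j : Fin m, j < i →
      ∃ l : Fin n,
        (X l * ∏ l' ∈ F (σ i), (X l' : MvPolynomial (Fin n) k)) ∈
          Ideal.span ((fun j : Fin m =>
            ∏ l ∈ F (σ j), (X l : MvPolynomial (Fin n) k)) '' {j : Fin m | j < i}) ∧
        l ∈ F (σ j) ∧ l ∉ F (σ i) := by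
    intro j hji
    have hjine : j ≠ i := ne_of_lt hji
    have hne : σ i ≠ σ j := fun e => hjine (σ.injective e).symm
    have hreach := linrel_reach hinj hcard hlin (σ i) (σ j)
    have hconn' := hconn (i.val + 1) (by omega) (by omega)
    have hmem_i : σ i ∈ {v : Fin m | ∃ j' : Fin m, j'.val < i.val + 1 ∧ σ j' = v} :=
      ⟨i, by omega, rfl⟩
    have hmem_j : σ j ∈ {v : Fin m | ∃ j' : Fin m, j'.val < i.val + 1 ∧ σ j' = v} :=
      ⟨j, by have := (Fin.lt_def).1 hji; omega, rfl⟩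
    obtain ⟨c, hadj, hPc, hQc⟩ :=
      tree_step htree (fun v => F v ⊆ F (σ i) ∪ F (σ j))
        (fun v => v ∈ {v : Fin m | ∃ j' : Fin m, j'.val < i.val + 1 ∧ σ j' = v})
        hne Finset.subset_union_left hreach
        (induced_walk _ _ hconn' hmem_i hmem_j)
    obtain ⟨j'', hj''lt, rfl⟩ := hQc
    have hj''i : j'' < i := by
      have hne'' : j'' ≠ i := by
        rintro rfl
        exact ((syzGraph F d).loopless.irrefl _ hadj).elim
      rw [Fin.lt_def]
      have : j''.val ≠ i.val := fun e => hne'' (Fin.ext e)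
      omega
    obtain ⟨l, hlc, hlnot, hsub⟩ := adj_sdiff hcard hadj.symm
    refine ⟨l, ?_, ?_, hlnot⟩
    · have hdvd : (∏ l' ∈ F (σ j''), (X l' : MvPolynomial (Fin n) k)) ∣
          X l * ∏ l' ∈ F (σ i), X l' := by
        rw [← Finset.prod_insert hlnot]
        exact Finset.prod_dvd_prod_of_subset _ _ _ hsub
      obtain ⟨q, hq⟩ := hdvd
      rw [hq]
      exact Ideal.mul_mem_right _ _ (Ideal.subset_span ⟨j'', hj''i, rfl⟩)
    · rcases Finset.mem_union.1 (hPc hlc) with h | h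
      · exact absurd h hlnot
      · exact h
  refine ⟨{l : Fin n | (X l * ∏ l' ∈ F (σ i), (X l' : MvPolynomial (Fin n) k)) ∈
      Ideal.span ((fun j : Fin m =>
        ∏ l ∈ F (σ j), (X l : MvPolynomial (Fin n) k)) '' {j : Fin m | j < i})}, ?_⟩
  have him : ((fun j : Fin m => ∏ l ∈ F (σ j), (X l : MvPolynomial (Fin n) k)) ''
        {j : Fin m | j < i})
      = ((fun s => monomial s (1 : k)) ''
        ((fun j : Fin m => expo (F (σ j))) '' {j : Fin m | j < i})) := by
    rw [Set.image_image]
    exact Set.image_congr fun j _ => prod_X_eq _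
  refine le_antisymm ?_ ?_
  · intro f hf
    rw [Ideal.mem_colon_span_singleton] at hf
    rw [mem_ideal_span_X_image]
    intro β hβ
    have hfu : f * monomial (expo (F (σ i))) 1 ∈
        Ideal.span ((fun s => monomial s (1 : k)) ''
          ((fun j : Fin m => expo (F (σ j))) '' {j : Fin m | j < i})) := by
      rw [← him, ← prod_X_eq]
      exact hf
    have hsupp : β + expo (F (σ i)) ∈ (f * monomial (expo (F (σ i))) 1).support := by
      rw [mem_support_iff, coeff_mul_monomial, mul_one]
      exact mem_support_iff.1 hβ
    obtain ⟨s, hs, hle⟩ := mem_ideal_span_monomial_image.1 hfu _ hsupp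
    obtain ⟨j, hji, rfl⟩ := hs
    obtain ⟨l, hlT, hlj, hlnot⟩ := hstar j hji
    refine ⟨l, hlT, ?_⟩
    have h1 : expo (F (σ j)) l ≤ (β + expo (F (σ i))) l := hle l
    rw [Finsupp.add_apply, expo_apply, expo_apply, if_pos hlj, if_neg hlnot] at h1
    omega
  · rw [Ideal.span_le]
    rintro x ⟨l, hl, rfl⟩
    rw [SetLike.mem_coe, Ideal.mem_colon_span_singleton]
    exact hl
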